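/- Let α, β, γ be non-zero complex numbers and m, n integers with m ≠ n and m, n ≠ 0. Consider the six expressions x₁ = α^m β^n, x₂ = α^n β^m, x₃ = α^m γ^n, x₄ = α^n γ^m, x₅ = β^m γ^n, x₆ = β^n γ^m (viewed as a list indexed by {1,…,6}, allowing accidental equalities of values). Assume the index set {1,…,6} admits a partition into three two-element sets such that for each pair, the quotient of the two corresponding expressions is a root of unity. Then one of α/β, α/γ, β/γ is a root of unity. -/
import Mathlib

open Polynomial
open scoped Classical

/-- A complex number is a root of unity. -/
def IsRootOfUnity (z : ℂ) : Prop := ∃ N : ℕ, 0 < N ∧ z ^ N = 1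

lemma rou_of_zpow {z : ℂ} (k : ℤ) (hk : k ≠ 0) (h : IsRootOfUnity (z ^ k)) :
    IsRootOfUnity z := by
  obtain ⟨N, hN, hzN⟩ := h
  have h1 : z ^ (k * N) = 1 := by
    rw [zpow_mul, zpow_natCast]; exact hzN
  have hkN : (k * N : ℤ) ≠ 0 := mul_ne_zero hk (by exact_mod_cast hN.ne')
  refine ⟨(k * N : ℤ).natAbs, Int.natAbs_pos.mpr hkN, ?_⟩
  have h2 : z ^ ((((k * N : ℤ)).natAbs : ℤ)) = 1 := by
    rcases Int.natAbs_eq (k * N : ℤ) with he | he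
    · rw [← he]; exact h1
    · rw [← neg_neg (((k * N : ℤ)).natAbs : ℤ), ← he, zpow_neg, h1, inv_one]
  rwa [zpow_natCast] at h2

lemma pat1 {m n : ℤ} (hmn : m ≠ n) {a b : ℂ} (ha : a ≠ 0) (hb : b ≠ 0)
    (h : IsRootOfUnity (a ^ m * b ^ n / (a ^ n * b ^ m))) : IsRootOfUnity (a / b) := by
  apply rou_of_zpow (m - n) (sub_ne_zero.mpr hmn)
  have e : (a / b) ^ (m - n) = a ^ m * b ^ n / (a ^ n * b ^ m) := by
    rw [div_zpow, zpow_sub₀ ha, zpow_sub₀ hb]; field_simp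
  rwa [e]

lemma pat2 {k : ℤ} (hk : k ≠ 0) {a b : ℂ} (c : ℂ) (hc : c ≠ 0) (l : ℤ)
    (h : IsRootOfUnity (c ^ l * a ^ k / (c ^ l * b ^ k))) : IsRootOfUnity (a / b) := by
  apply rou_of_zpow k hk
  have e : (a / b) ^ k = c ^ l * a ^ k / (c ^ l * b ^ k) := by
    rw [div_zpow, mul_div_mul_left _ _ (zpow_ne_zero _ hc)]
  rwa [e]

lemma pat3 {k : ℤ} (hk : k ≠ 0) {a b : ℂ} (c : ℂ) (hc : c ≠ 0) (l : ℤ)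
    (h : IsRootOfUnity (a ^ k * c ^ l / (b ^ k * c ^ l))) : IsRootOfUnity (a / b) := by
  apply rou_of_zpow k hk
  have e : (a / b) ^ k = a ^ k * c ^ l / (b ^ k * c ^ l) := by
    rw [div_zpow, mul_div_mul_right _ _ (zpow_ne_zero _ hc)]
  rwa [e]

lemma pat4 {k : ℤ} (hk : k ≠ 0) {a b : ℂ} (c : ℂ) (hc : c ≠ 0) (l : ℤ)
    (h : IsRootOfUnity (a ^ k * c ^ l / (c ^ l * b ^ k))) : IsRootOfUnity (a / b) := by
  apply rou_of_zpow k hk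
  have e : (a / b) ^ k = a ^ k * c ^ l / (c ^ l * b ^ k) := by
    rw [div_zpow, mul_comm (c ^ l) (b ^ k), mul_div_mul_right _ _ (zpow_ne_zero _ hc)]
  rwa [e]

def goodb (i j : Fin 6) : Bool :=
  decide ((i.val, j.val) ∈ [(0,1),(0,2),(0,5),(1,3),(1,4),(2,3),(2,4),(3,5),(4,5),
    (1,0),(2,0),(5,0),(3,1),(4,1),(3,2),(4,2),(5,3),(5,4)])

set_option maxHeartbeats 1000000 in
lemma keyFin0 : ∀ b c d e f : Fin 6, (0 : Fin 6) ≠ b → c ≠ d → e ≠ f →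
    (∀ i : Fin 6, i = 0 ∨ i = b ∨ i = c ∨ i = d ∨ i = e ∨ i = f) →
    goodb 0 b ∨ goodb c d ∨ goodb e f := by decide

lemma resolve (α β γ : ℂ) (m n : ℤ)
    (hα : α ≠ 0) (hβ : β ≠ 0) (hγ : γ ≠ 0)
    (hmn : m ≠ n) (hm : m ≠ 0) (hn : n ≠ 0)
    (x : Fin 6 → ℂ)
    (hx : x = ![α ^ m * β ^ n, α ^ n * β ^ m, α ^ m * γ ^ n, α ^ n * γ ^ m,
      β ^ m * γ ^ n, β ^ n * γ ^ m])
    (i j : Fin 6) (hg : goodb i j = true)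
    (h1 : IsRootOfUnity (x i / x j)) (h2 : IsRootOfUnity (x j / x i)) :
    IsRootOfUnity (α / β) ∨ IsRootOfUnity (α / γ) ∨ IsRootOfUnity (β / γ) := by
  subst hx
  fin_cases i <;> fin_cases j <;>
  first
    | exact absurd hg (by decide)
    | exact Or.inl (pat1 hmn hα hβ h1)
    | exact Or.inl (pat1 hmn hα hβ h2)
    | exact Or.inr (Or.inl (pat1 hmn hα hγ h1))
    | exact Or.inr (Or.inl (pat1 hmn hα hγ h2))
    | exact Or.inr (Or.inr (pat1 hmn hβ hγ h1))
    | exact Or.inr (Or.inr (pat1 hmn hβ hγ h2))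
    | exact Or.inr (Or.inr (pat2 hn α hα m h1))
    | exact Or.inr (Or.inr (pat2 hn α hα m h2))
    | exact Or.inr (Or.inr (pat2 hm α hα n h1))
    | exact Or.inr (Or.inr (pat2 hm α hα n h2))
    | exact Or.inl (pat3 hm γ hγ n h1)
    | exact Or.inl (pat3 hm γ hγ n h2)
    | exact Or.inl (pat3 hn γ hγ m h1)
    | exact Or.inl (pat3 hn γ hγ m h2)
    | exact Or.inr (Or.inl (pat4 hm β hβ n h1))
    | exact Or.inr (Or.inl (pat4 hm β hβ n h2))
    | exact Or.inr (Or.inl (pat4 hn β hβ m h1))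
    | exact Or.inr (Or.inl (pat4 hn β hβ m h2))

set_option maxHeartbeats 1000000 in
/-- If the six monomial expressions in `α, β, γ` admit a partition of their indices into
three pairs such that in each pair the quotient of the two expressions is a root of unity,
then one of `α/β`, `α/γ`, `β/γ` is a root of unity. -/
theorem rootOfUnity_of_partition_three_pairs (α β γ : ℂ) (m n : ℤ)
    (hα : α ≠ 0) (hβ : β ≠ 0) (hγ : γ ≠ 0)
    (hmn : m ≠ n) (hm : m ≠ 0) (hn : n ≠ 0)
    (x : Fin 6 → ℂ)
    (hx : x = ![α ^ m * β ^ n, α ^ n * β ^ m, α ^ m * γ ^ n, α ^ n * γ ^ m,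
      β ^ m * γ ^ n, β ^ n * γ ^ m])
    (hpart : ∃ V₁ V₂ V₃ : Finset (Fin 6),
      V₁.card = 2 ∧ V₂.card = 2 ∧ V₃.card = 2 ∧
      Disjoint V₁ V₂ ∧ Disjoint V₁ V₃ ∧ Disjoint V₂ V₃ ∧
      V₁ ∪ V₂ ∪ V₃ = Finset.univ ∧
      (∀ i ∈ V₁, ∀ j ∈ V₁, i ≠ j → IsRootOfUnity (x i / x j)) ∧
      (∀ i ∈ V₂, ∀ j ∈ V₂, i ≠ j → IsRootOfUnity (x i / x j)) ∧
      (∀ i ∈ V₃, ∀ j ∈ V₃, i ≠ j → IsRootOfUnity (x i / x j))) :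
    IsRootOfUnity (α / β) ∨ IsRootOfUnity (α / γ) ∨ IsRootOfUnity (β / γ) := by
  obtain ⟨V₁, V₂, V₃, hc₁, hc₂, hc₃, -, -, -, huniv, H₁, H₂, H₃⟩ := hpart
  obtain ⟨a₁, b₁, hab₁, rfl⟩ := Finset.card_eq_two.mp hc₁
  obtain ⟨a₂, b₂, hab₂, rfl⟩ := Finset.card_eq_two.mp hc₂
  obtain ⟨a₃, b₃, hab₃, rfl⟩ := Finset.card_eq_two.mp hc₃
  have cover : ∀ i : Fin 6, i = a₁ ∨ i = b₁ ∨ i = a₂ ∨ i = b₂ ∨ i = a₃ ∨ i = b₃ := by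
    intro i
    have hi : i ∈ ({a₁, b₁} ∪ {a₂, b₂} ∪ {a₃, b₃} : Finset (Fin 6)) :=
      huniv ▸ Finset.mem_univ i
    simp only [Finset.mem_union, Finset.mem_insert, Finset.mem_singleton] at hi
    tauto
  have R1 : IsRootOfUnity (x a₁ / x b₁) := H₁ a₁ (by simp) b₁ (by simp) hab₁
  have R1' : IsRootOfUnity (x b₁ / x a₁) := H₁ b₁ (by simp) a₁ (by simp) hab₁.symm
  have R2 : IsRootOfUnity (x a₂ / x b₂) := H₂ a₂ (by simp) b₂ (by simp) hab₂
  have R2' : IsRootOfUnity (x b₂ / x a₂) := H₂ b₂ (by simp) a₂ (by simp) hab₂.symm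
  have R3 : IsRootOfUnity (x a₃ / x b₃) := H₃ a₃ (by simp) b₃ (by simp) hab₃
  have R3' : IsRootOfUnity (x b₃ / x a₃) := H₃ b₃ (by simp) a₃ (by simp) hab₃.symm
  have main : ∀ a b c d e f : Fin 6, a = 0 → a ≠ b → c ≠ d → e ≠ f →
      (∀ i : Fin 6, i = a ∨ i = b ∨ i = c ∨ i = d ∨ i = e ∨ i = f) →
      IsRootOfUnity (x a / x b) → IsRootOfUnity (x b / x a) →
      IsRootOfUnity (x c / x d) → IsRootOfUnity (x d / x c) →
      IsRootOfUnity (x e / x f) → IsRootOfUnity (x f / x e) →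
      IsRootOfUnity (α / β) ∨ IsRootOfUnity (α / γ) ∨ IsRootOfUnity (β / γ) := by
    rintro a b c d e f rfl hab hcd hef hcov r1 r1' r2 r2' r3 r3'
    rcases keyFin0 b c d e f hab hcd hef hcov with hg | hg | hg
    · exact resolve α β γ m n hα hβ hγ hmn hm hn x hx 0 b hg r1 r1'
    · exact resolve α β γ m n hα hβ hγ hmn hm hn x hx c d hg r2 r2'
    · exact resolve α β γ m n hα hβ hγ hmn hm hn x hx e f hg r3 r3'
  rcases cover 0 with h | h | h | h | h | h
  · exact main a₁ b₁ a₂ b₂ a₃ b₃ h.symm hab₁ hab₂ hab₃ cover R1 R1' R2 R2' R3 R3'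
  · exact main b₁ a₁ a₂ b₂ a₃ b₃ h.symm hab₁.symm hab₂ hab₃
      (fun i => by rcases cover i with h | h | h | h | h | h <;> tauto) R1' R1 R2 R2' R3 R3'
  · exact main a₂ b₂ a₁ b₁ a₃ b₃ h.symm hab₂ hab₁ hab₃
      (fun i => by rcases cover i with h | h | h | h | h | h <;> tauto) R2 R2' R1 R1' R3 R3'
  · exact main b₂ a₂ a₁ b₁ a₃ b₃ h.symm hab₂.symm hab₁ hab₃
      (fun i => by rcases cover i with h | h | h | h | h | h <;> tauto) R2' R2 R1 R1' R3 R3'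
  · exact main a₃ b₃ a₁ b₁ a₂ b₂ h.symm hab₃ hab₁ hab₂
      (fun i => by rcases cover i with h | h | h | h | h | h <;> tauto) R3 R3' R1 R1' R2 R2'
  · exact main b₃ a₃ a₁ b₁ a₂ b₂ h.symm hab₃.symm hab₁ hab₂
      (fun i => by rcases cover i with h | h | h | h | h | h <;> tauto) R3' R3 R1 R1' R2 R2'
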